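/- With the sets of the previous statement and T = (1/3)(P_1 + P_2 + P_3), one has Fix T = {(ξ_1,ξ_2) ∈ C_3 : ξ_2 = (α+β)/2} and Fix(P_3∘P_2∘P_1) = {(ξ_1,ξ_2) ∈ C_3 : ξ_2 = β}. In particular, if β < 0 < α+β and η = 1 + β/α, then η ∈ (0,1), Fix R^ε ≠ ∅ for ε < η, and Fix R^ε = ∅ for ε ≥ η. -/

import Mathlib

open Filter Topology

local notation "E2" => EuclideanSpace ℝ (Fin 2)

private lemma ext2 {x y : E2} (h0 : x 0 = y 0) (h1 : x 1 = y 1) : x = y := by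
  ext i; fin_cases i <;> assumption

private lemma normsq (x : E2) : ‖x‖ ^ 2 = x 0 ^ 2 + x 1 ^ 2 := by
  rw [EuclideanSpace.norm_eq, Real.sq_sqrt (by positivity)]
  simp [Fin.sum_univ_two]

private lemma pt_mk (a b : ℝ) : ∃ y : E2, y 0 = a ∧ y 1 = b :=
  ⟨(WithLp.equiv 2 (Fin 2 → ℝ)).symm ![a, b], rfl, rfl⟩

/-- projection onto a horizontal line equals (x 0, c). -/
private lemma projL (c : ℝ) (x Px : E2) (hmem : Px 1 = c)
    (hmin : ∀ y : E2, y 1 = c → ‖x - Px‖ ≤ ‖x - y‖) :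
    Px 0 = x 0 ∧ Px 1 = c := by
  refine ⟨?_, hmem⟩
  obtain ⟨y, hy0, hy1⟩ := pt_mk (x 0) c
  have h := hmin y hy1
  have h2 : ‖x - Px‖ ^ 2 ≤ ‖x - y‖ ^ 2 := pow_le_pow_left₀ (norm_nonneg _) h 2
  rw [normsq, normsq] at h2
  simp only [PiLp.sub_apply, hy0, hy1, hmem] at h2
  nlinarith [sq_nonneg (x 0 - Px 0)]

private lemma proj_self {K : Set E2} {P : E2 → E2}
    (hP : ∀ x, P x ∈ K ∧ ∀ y ∈ K, ‖x - P x‖ ≤ ‖x - y‖) {x : E2} (hx : x ∈ K) : P x = x := by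
  have h := (hP x).2 x hx
  simp only [sub_self, norm_zero] at h
  have h0 : ‖x - P x‖ = 0 := le_antisymm h (norm_nonneg _)
  exact (sub_eq_zero.mp (norm_eq_zero.mp h0)).symm

private lemma C3convex (γ : ℝ) :
    Convex ℝ {p : E2 | 0 < p 0 ∧ 0 < p 1 ∧ γ ≤ p 0 * p 1} := by
  rintro p ⟨hp0, hp1, hpγ⟩ q ⟨hq0, hq1, hqγ⟩ a b ha hb hab
  have hb1 : b = 1 - a := by linarith
  subst hb1
  have hpos : ∀ u v : ℝ, 0 < u → 0 < v → 0 < a * u + (1 - a) * v := by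
    intro u v hu hv
    rcases lt_or_eq_of_le ha with h | h
    · nlinarith [mul_pos h hu, mul_nonneg hb hv.le]
    · rw [← h]; simpa using hv
  have h0' := hpos _ _ hp0 hq0
  have h1' := hpos _ _ hp1 hq1
  refine ⟨?_, ?_, ?_⟩ <;> simp only [Set.mem_setOf_eq, PiLp.add_apply, PiLp.smul_apply,
    smul_eq_mul]
  · exact h0'
  · exact h1'
  · rcases le_or_gt γ 0 with hγ | hγ
    · nlinarith
    · have hs : 2 * γ ≤ p 0 * q 1 + q 0 * p 1 := by
        have h1 : γ * γ ≤ (p 0 * p 1) * (q 0 * q 1) := by nlinarith [mul_pos hp0 hp1]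
        nlinarith [sq_nonneg (p 0 * q 1 - q 0 * p 1), mul_pos hp0 hq1, mul_pos hq0 hp1]
      nlinarith [mul_nonneg (mul_nonneg ha (by linarith : (0:ℝ) ≤ 1 - a))
          (by linarith : (0:ℝ) ≤ p 0 * q 1 + q 0 * p 1 - 2 * γ),
        mul_nonneg (mul_nonneg ha ha) (by linarith : (0:ℝ) ≤ p 0 * p 1 - γ),
        mul_nonneg (mul_nonneg (by linarith : (0:ℝ) ≤ 1 - a) (by linarith : (0:ℝ) ≤ 1 - a))
          (by linarith : (0:ℝ) ≤ q 0 * q 1 - γ)]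

/-- variational inequality for the projection onto C3. -/
private lemma VI {γ : ℝ} {P3 : E2 → E2}
    (hP3 : ∀ x, P3 x ∈ {p : E2 | 0 < p 0 ∧ 0 < p 1 ∧ γ ≤ p 0 * p 1} ∧
      ∀ y ∈ {p : E2 | 0 < p 0 ∧ 0 < p 1 ∧ γ ≤ p 0 * p 1}, ‖x - P3 x‖ ≤ ‖x - y‖)
    (x : E2) :
    ∀ w ∈ {p : E2 | 0 < p 0 ∧ 0 < p 1 ∧ γ ≤ p 0 * p 1},
      (inner ℝ (x - P3 x) (w - P3 x) : ℝ) ≤ 0 := by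
  set K := {p : E2 | 0 < p 0 ∧ 0 < p 1 ∧ γ ≤ p 0 * p 1}
  have hvK : P3 x ∈ K := (hP3 x).1
  haveI : Nonempty K := ⟨⟨P3 x, hvK⟩⟩
  rw [← norm_eq_iInf_iff_real_inner_le_zero (C3convex γ) hvK]
  refine le_antisymm (le_ciInf fun w => (hP3 x).2 w w.2) ?_
  exact ciInf_le ⟨0, fun _ ⟨_, h⟩ => h ▸ norm_nonneg _⟩ (⟨P3 x, hvK⟩ : K)

/-- key: if r ∈ C3, q and r share first coordinate, and the VI holds for q at r,
then q = r. -/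
private lemma key {γ : ℝ} (hγ : 0 < γ) {q r : E2}
    (hr : 0 < r 0 ∧ 0 < r 1 ∧ γ ≤ r 0 * r 1) (h0 : q 0 = r 0)
    (hvi : ∀ w ∈ {p : E2 | 0 < p 0 ∧ 0 < p 1 ∧ γ ≤ p 0 * p 1},
      (inner ℝ (q - r) (w - r) : ℝ) ≤ 0) : q = r := by
  obtain ⟨hr0, hr1, hrγ⟩ := hr
  have hvi' : ∀ w : E2, 0 < w 0 → 0 < w 1 → γ ≤ w 0 * w 1 →
      (q 1 - r 1) * (w 1 - r 1) ≤ 0 := by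
    intro w hw0 hw1 hwγ
    have := hvi w ⟨hw0, hw1, hwγ⟩
    simpa [PiLp.inner_apply, Fin.sum_univ_two, PiLp.sub_apply, h0, mul_comm] using this
  -- test point above
  obtain ⟨wu, hwu0, hwu1⟩ := pt_mk (max (r 0) (γ / (r 1 + 1))) (r 1 + 1)
  have hup : q 1 - r 1 ≤ 0 := by
    have hd : 0 < γ / (r 1 + 1) := by positivity
    have h := hvi' wu (by rw [hwu0]; exact lt_max_of_lt_right hd) (by rw [hwu1]; linarith) ?_
    · rw [hwu1] at h; nlinarith
    · rw [hwu0, hwu1]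
      calc γ = γ / (r 1 + 1) * (r 1 + 1) := by field_simp
        _ ≤ max (r 0) (γ / (r 1 + 1)) * (r 1 + 1) := by
            apply mul_le_mul_of_nonneg_right (le_max_right _ _); linarith
  -- test point below
  obtain ⟨wd, hwd0, hwd1⟩ := pt_mk (r 0 + γ / (r 1 / 2)) (r 1 / 2)
  have hdn : 0 ≤ q 1 - r 1 := by
    have hs : 0 < r 1 / 2 := by linarith
    have h := hvi' wd (by rw [hwd0]; positivity) (by rw [hwd1]; linarith) ?_
    · rw [hwd1] at h; nlinarith
    · rw [hwd0, hwd1]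
      have : γ / (r 1 / 2) * (r 1 / 2) = γ := by field_simp
      nlinarith [mul_pos hr0 hs]
  exact ext2 h0 (by linarith)

theorem stmt12 (α β γ : ℝ) (hγ : 0 < γ)
    (C1 C2 C3 : Set (EuclideanSpace ℝ (Fin 2)))
    (hC1 : C1 = {p | p 1 = α}) (hC2 : C2 = {p | p 1 = β})
    (hC3 : C3 = {p | 0 < p 0 ∧ 0 < p 1 ∧ γ ≤ p 0 * p 1})
    (P1 P2 P3 : EuclideanSpace ℝ (Fin 2) → EuclideanSpace ℝ (Fin 2))
    (hP1 : ∀ x, P1 x ∈ C1 ∧ ∀ y ∈ C1, ‖x - P1 x‖ ≤ ‖x - y‖)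
    (hP2 : ∀ x, P2 x ∈ C2 ∧ ∀ y ∈ C2, ‖x - P2 x‖ ≤ ‖x - y‖)
    (hP3 : ∀ x, P3 x ∈ C3 ∧ ∀ y ∈ C3, ‖x - P3 x‖ ≤ ‖x - y‖) :
    {p | (3:ℝ)⁻¹ • (P1 p + P2 p + P3 p) = p} = {p ∈ C3 | p 1 = (α + β) / 2} ∧
    {p | P3 (P2 (P1 p)) = p} = {p ∈ C3 | p 1 = β} ∧
    (β < 0 → 0 < α + β →
      (1 + β / α) ∈ Set.Ioo (0:ℝ) 1 ∧
      ∀ ε ∈ Set.Ioo (0:ℝ) 1,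
        (ε < 1 + β / α →
          {p | (fun q => q + ε • (P3 q - q))
            ((fun q => q + ε • (P2 q - q))
              ((fun q => q + ε • (P1 q - q)) p)) = p}.Nonempty) ∧
        (1 + β / α ≤ ε →
          {p | (fun q => q + ε • (P3 q - q))
            ((fun q => q + ε • (P2 q - q))
              ((fun q => q + ε • (P1 q - q)) p)) = p} = ∅)) := by
  subst hC1 hC2 hC3
  -- formulas for P1, P2
  have hPL1 : ∀ x : E2, (P1 x) 0 = x 0 ∧ (P1 x) 1 = α := fun x =>
    projL α x (P1 x) (hP1 x).1 fun y hy => (hP1 x).2 y hy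
  have hPL2 : ∀ x : E2, (P2 x) 0 = x 0 ∧ (P2 x) 1 = β := fun x =>
    projL β x (P2 x) (hP2 x).1 fun y hy => (hP2 x).2 y hy
  have hself : ∀ x : E2, (0 < x 0 ∧ 0 < x 1 ∧ γ ≤ x 0 * x 1) → P3 x = x :=
    fun x hx => proj_self hP3 hx
  have hvi := VI hP3
  -- coordinate extraction helpers
  have c0 : ∀ {u v : E2}, u = v → u 0 = v 0 := fun h => by rw [h]
  have c1 : ∀ {u v : E2}, u = v → u 1 = v 1 := fun h => by rw [h]
  refine ⟨?_, ?_, ?_⟩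
  · -- Fix T
    ext p
    simp only [Set.mem_setOf_eq]
    constructor
    · intro h
      obtain ⟨hr0, hr1, hrγ⟩ := (hP3 p).1
      have h0 := c0 h
      have h1 := c1 h
      simp only [PiLp.smul_apply, PiLp.add_apply, smul_eq_mul, (hPL1 p).1, (hPL1 p).2,
        (hPL2 p).1, (hPL2 p).2] at h0 h1
      have hq0 : p 0 = (P3 p) 0 := by linarith
      have hpr : p = P3 p := key hγ ⟨hr0, hr1, hrγ⟩ hq0 (hvi p)
      have hp1 : p 1 = (P3 p) 1 := c1 hpr
      refine ⟨hpr ▸ ⟨hr0, hr1, hrγ⟩, by linarith⟩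
    · rintro ⟨hpC, hp1⟩
      rw [hself p hpC]
      refine ext2 ?_ ?_ <;>
        simp only [PiLp.smul_apply, PiLp.add_apply, smul_eq_mul, (hPL1 p).1, (hPL1 p).2,
          (hPL2 p).1, (hPL2 p).2] <;> linarith
  · -- Fix P3 ∘ P2 ∘ P1
    ext p
    simp only [Set.mem_setOf_eq]
    constructor
    · intro h
      set q := P2 (P1 p) with hq
      have hq0 : q 0 = p 0 := by rw [hq, (hPL2 _).1, (hPL1 _).1]
      have hq1 : q 1 = β := (hPL2 _).2
      obtain ⟨hr0, hr1, hrγ⟩ := (hP3 q).1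
      have hqr : q = P3 q := key hγ ⟨hr0, hr1, hrγ⟩ (by rw [hq0, ← c0 h]) (hvi q)
      have : q 1 = (P3 q) 1 := c1 hqr
      have hp1 : p 1 = β := by rw [← c1 h, ← this, hq1]
      exact ⟨h ▸ ⟨hr0, hr1, hrγ⟩, hp1⟩
    · rintro ⟨hpC, hp1⟩
      have h2 : P2 (P1 p) = p := ext2 (by rw [(hPL2 _).1, (hPL1 _).1]) (by rw [(hPL2 _).2, hp1])
      rw [h2, hself p hpC]
  · -- relaxed projections
    intro hβ hαβ
    have hα : 0 < α := by linarith
    have hη1 : -1 < β / α := by rw [lt_div_iff₀ hα]; linarith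
    have hη2 : β / α < 0 := div_neg_of_neg_of_pos hβ hα
    refine ⟨⟨by linarith, by linarith⟩, ?_⟩
    rintro ε ⟨hε0, hε1⟩
    have hηα : (1 + β / α) * α = α + β := by field_simp
    constructor
    · -- nonempty
      intro hεη
      have hnum : 0 < (1 - ε) * α + β := by
        have : ε * α < (1 + β / α) * α := by
          apply mul_lt_mul_of_pos_right hεη hα
        rw [hηα] at this; nlinarith
      set m : ℝ := ((1 - ε) * α + β) / (2 - ε) with hm
      have hm0 : 0 < m := by apply div_pos hnum; linarith
      have hmeq : m * (2 - ε) = (1 - ε) * α + β := by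
        rw [hm, div_mul_cancel₀ _ (ne_of_gt (by linarith : (0:ℝ) < 2 - ε))]
      obtain ⟨p, hp0, hp1⟩ := pt_mk (γ / m) m
      have hpC : 0 < p 0 ∧ 0 < p 1 ∧ γ ≤ p 0 * p 1 := by
        refine ⟨by rw [hp0]; positivity, by rw [hp1]; exact hm0, ?_⟩
        rw [hp0, hp1, div_mul_cancel₀ _ (ne_of_gt hm0)]
      refine ⟨p, ?_⟩
      simp only [Set.mem_setOf_eq]
      have hB : (p + ε • (P1 p - p)) + ε • (P2 (p + ε • (P1 p - p)) - (p + ε • (P1 p - p)))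
          = p := by
        refine ext2 ?_ ?_ <;>
          simp only [PiLp.add_apply, PiLp.smul_apply, PiLp.sub_apply, smul_eq_mul,
            (hPL1 p).1, (hPL1 p).2, (hPL2 _).1, (hPL2 _).2]
        · ring
        · rw [hp1]; linear_combination (-ε) * hmeq
      rw [hB, hself p hpC]
      simp
    · -- empty
      intro hηε
      rw [Set.eq_empty_iff_forall_notMem]
      intro p hp
      simp only [Set.mem_setOf_eq] at hp
      set A := p + ε • (P1 p - p) with hA
      set B := A + ε • (P2 A - A) with hB
      have hB0 : B 0 = p 0 := by
        simp only [hB, hA, PiLp.add_apply, PiLp.smul_apply, PiLp.sub_apply, smul_eq_mul,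
          (hPL1 p).1, (hPL2 _).1]
        ring
      have hB1 : B 1 = (1 - ε) * ((1 - ε) * p 1 + ε * α) + ε * β := by
        simp only [hB, hA, PiLp.add_apply, PiLp.smul_apply, PiLp.sub_apply, smul_eq_mul,
          (hPL1 p).2, (hPL2 _).2]
        ring
      obtain ⟨hr0, hr1, hrγ⟩ := (hP3 B).1
      have h0 := c0 hp
      have h1 := c1 hp
      simp only [PiLp.add_apply, PiLp.smul_apply, PiLp.sub_apply, smul_eq_mul] at h0 h1
      -- h0 : B 0 + ε * ((P3 B) 0 - B 0) = p 0
      have hBr0 : B 0 = (P3 B) 0 := by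
        rw [hB0] at h0
        have : ε * ((P3 B) 0 - p 0) = 0 := by linarith
        have := (mul_eq_zero.mp this).resolve_left (ne_of_gt hε0)
        rw [hB0]; linarith
      have hBr : B = P3 B := key hγ ⟨hr0, hr1, hrγ⟩ hBr0 (hvi B)
      have hBp1 : B 1 = p 1 := by
        have hc := c1 hBr
        rw [← hc] at h1
        linarith
      have hB1pos : 0 < B 1 := by rw [hBr]; exact hr1
      have hp1pos : 0 < p 1 := by rw [← hBp1]; exact hB1pos
      have heq : (2 - ε) * p 1 = (1 - ε) * α + β := by
        have h := hB1
        rw [hBp1] at h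
        have : ε * ((2 - ε) * p 1 - ((1 - ε) * α + β)) = 0 := by linear_combination h
        have := (mul_eq_zero.mp this).resolve_left (ne_of_gt hε0)
        linarith
      have hεα : (1 + β / α) * α ≤ ε * α := mul_le_mul_of_nonneg_right hηε hα.le
      rw [hηα] at hεα
      have hpos := mul_pos (show (0:ℝ) < 2 - ε by linarith) hp1pos
      linarith
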